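/- For any k ≥ 1 and any element y in the k-th term Γ_G(k) of the lower central series of G, and any 1 ≤ i,j ≤ m, one has s_{ij}(y) ∈ 𝔍_G^k. -/

import Mathlib

set_option synthInstance.maxHeartbeats 1000000
set_option maxHeartbeats 1000000
open scoped BigOperators

/-- The set of `SL(m,ℂ)`-representations of a group `G`. -/
abbrev SLRep (G : Type*) [Group G] (m : ℕ) := G →* Matrix.SpecialLinearGroup (Fin m) ℂ

/-- The `(i,j)`-component function `a_{ij}(x)`. -/
noncomputable def afun {G : Type*} [Group G] (m : ℕ) (i j : Fin m) (x : G) :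
    SLRep G m → ℂ :=
  fun ρ => ((ρ x : Matrix.SpecialLinearGroup (Fin m) ℂ) : Matrix (Fin m) (Fin m) ℂ) i j

/-- The `SL(m,ℂ)`-representation algebra `𝔯_ℚ^m(G)`: the ℚ-subalgebra of functions on the
representation variety generated by all component functions. -/
noncomputable def RepAlg (G : Type*) [Group G] (m : ℕ) : Subalgebra ℚ (SLRep G m → ℂ) :=
  Algebra.adjoin ℚ {f | ∃ i j x, f = afun m i j x}

theorem afun_mem {G : Type*} [Group G] (m : ℕ) (i j : Fin m) (x : G) :
    afun m i j x ∈ RepAlg G m :=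
  Algebra.subset_adjoin ⟨i, j, x, rfl⟩

/-- `s_{ij}(x) = a_{ij}(x) - δ_{ij}`. -/
noncomputable def sfun {G : Type*} [Group G] (m : ℕ) (i j : Fin m) (x : G) :
    SLRep G m → ℂ :=
  afun m i j x - if i = j then 1 else 0

theorem sfun_mem {G : Type*} [Group G] (m : ℕ) (i j : Fin m) (x : G) :
    sfun m i j x ∈ RepAlg G m := by
  unfold sfun
  refine sub_mem (afun_mem m i j x) ?_
  split_ifs
  · exact one_mem _
  · exact zero_mem _

/-- `a_{ij}(x)` as an element of the representation algebra. -/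
noncomputable def aEl {G : Type*} [Group G] (m : ℕ) (i j : Fin m) (x : G) : RepAlg G m :=
  ⟨afun m i j x, afun_mem m i j x⟩

/-- `s_{ij}(x)` as an element of the representation algebra. -/
noncomputable def sEl {G : Type*} [Group G] (m : ℕ) (i j : Fin m) (x : G) : RepAlg G m :=
  ⟨sfun m i j x, sfun_mem m i j x⟩

/-- The ideal `𝔍_G` generated by all `s_{ij}(x)`, `x ∈ G`. -/
noncomputable def JId (G : Type*) [Group G] (m : ℕ) : Ideal (RepAlg G m) :=
  Ideal.span {f | ∃ i j x, f = sEl m i j x}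

/-- The ideal generated by the `s_{ij}(x_l)` for a generating family `x`. -/
noncomputable def JIdGen {G : Type*} [Group G] (m n : ℕ) (x : Fin n → G) :
    Ideal (RepAlg G m) :=
  Ideal.span {f | ∃ i j l, f = sEl m i j (x l)}

/-- The pullback action of `σ ∈ Aut G` on functions on the representation variety:
`χ^σ(ρ) = χ(ρ ∘ σ)`. -/
noncomputable def pullback {G : Type*} [Group G] (m : ℕ) (σ : MulAut G) :
    (SLRep G m → ℂ) →ₐ[ℚ] (SLRep G m → ℂ) where
  toFun χ := fun ρ => χ (ρ.comp σ.toMonoidHom)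
  map_one' := rfl
  map_mul' _ _ := rfl
  map_zero' := rfl
  map_add' _ _ := rfl
  commutes' _ := rfl

theorem pullback_afun {G : Type*} [Group G] (m : ℕ) (σ : MulAut G) (i j : Fin m) (x : G) :
    pullback m σ (afun m i j x) = afun m i j (σ x) := rfl

theorem pullback_maps {G : Type*} [Group G] (m : ℕ) (σ : MulAut G) :
    (RepAlg G m).map (pullback m σ) ≤ RepAlg G m := by
  rw [RepAlg, AlgHom.map_adjoin]
  apply Algebra.adjoin_mono
  rintro _ ⟨g, ⟨i, j, x, rfl⟩, rfl⟩
  exact ⟨i, j, σ x, rfl⟩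

/-- The action of `Aut G` on the representation algebra. -/
noncomputable def actA {G : Type*} [Group G] (m : ℕ) (σ : MulAut G) :
    RepAlg G m →ₐ[ℚ] RepAlg G m :=
  ((pullback m σ).comp (RepAlg G m).val).codRestrict (RepAlg G m)
    (fun f => pullback_maps m σ ⟨(f : SLRep G m → ℂ), f.2, rfl⟩)

/-- The filtration `𝒟_G^m(k) = Ker(Aut G → Aut(𝔍_G/𝔍_G^{k+1}))`, described elementwise. -/
noncomputable def Dfil (G : Type*) [Group G] (m k : ℕ) : Set (MulAut G) :=
  {σ | ∀ f ∈ JId G m, actA m σ f - f ∈ JId G m ^ (k + 1)}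


section Aux
variable {G : Type*} [Group G] {m : ℕ}

theorem sEl_one (i j : Fin m) : sEl m i j (1:G) = 0 := by
  apply Subtype.ext
  funext ρ
  simp [sEl, sfun, afun, Matrix.one_apply, apply_ite (fun f : SLRep G m → ℂ => f ρ)]

theorem sEl_mul (i j : Fin m) (x y : G) :
    sEl m i j (x*y) = sEl m i j x + sEl m i j y + ∑ h, sEl m i h x * sEl m h j y := by
  apply Subtype.ext
  have hs : ((∑ h, sEl m i h x * sEl m h j y : RepAlg G m) : SLRep G m → ℂ)
      = ∑ h, (sfun m i h x) * (sfun m h j y) := by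
    push_cast [sEl]; rfl
  funext ρ
  rw [Subalgebra.coe_add, Subalgebra.coe_add, hs]
  show sfun m i j (x*y) ρ = _
  simp only [sfun, afun, sEl, Pi.add_apply, Pi.sub_apply, Pi.mul_apply, Finset.sum_apply,
    map_mul, Matrix.SpecialLinearGroup.coe_mul, Matrix.mul_apply,
    apply_ite (fun f : SLRep G m → ℂ => f ρ), Pi.one_apply, Pi.zero_apply]
  have key : ∀ h : Fin m, ((ρ x : Matrix (Fin m) (Fin m) ℂ) i h) * ((ρ y : Matrix (Fin m) (Fin m) ℂ) h j)
      = (((ρ x : Matrix (Fin m) (Fin m) ℂ) i h - if i = h then 1 else 0) + if i = h then 1 else 0)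
        * ((((ρ y : Matrix (Fin m) (Fin m) ℂ) h j - if h = j then 1 else 0)) + if h = j then 1 else 0) := by
    intro h; ring
  rw [Finset.sum_congr rfl fun h _ => key h]
  simp only [add_mul, mul_add, Finset.sum_add_distrib]
  simp [Finset.sum_ite_eq, Finset.sum_ite_eq', mul_ite, ite_mul]
  ring

theorem sEl_inv (i j : Fin m) (x : G) :
    sEl m i j x⁻¹ = -sEl m i j x - ∑ h, sEl m i h x * sEl m h j x⁻¹ := by
  have h := sEl_mul i j x x⁻¹
  rw [show x * x⁻¹ = 1 by group, sEl_one] at h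
  linear_combination -h

theorem sEl_mem_JId (i j : Fin m) (x : G) : sEl m i j x ∈ JId G m :=
  Ideal.subset_span ⟨i, j, x, rfl⟩

theorem sEl_mul_mem {I : Ideal (RepAlg G m)} {x y : G}
    (hx : ∀ i j, sEl m i j x ∈ I) (hy : ∀ i j, sEl m i j y ∈ I) (i j : Fin m) :
    sEl m i j (x*y) ∈ I := by
  rw [sEl_mul]
  exact add_mem (add_mem (hx i j) (hy i j))
    (Ideal.sum_mem _ fun h _ => Ideal.mul_mem_right _ _ (hx i h))

theorem sEl_inv_mem {I : Ideal (RepAlg G m)} {x : G}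
    (hx : ∀ i j, sEl m i j x ∈ I) (i j : Fin m) : sEl m i j x⁻¹ ∈ I := by
  rw [sEl_inv]
  exact sub_mem (neg_mem (hx i j))
    (Ideal.sum_mem _ fun h _ => Ideal.mul_mem_right _ _ (hx i h))

theorem sEl_comm_mem (k : ℕ) (z g : G)
    (hz : ∀ i j, sEl m i j z ∈ JId G m ^ (k+1))
    (hc : ∀ i j, sEl m i j (z*g*z⁻¹*g⁻¹) ∈ JId G m ^ (k+1)) (i j : Fin m) :
    sEl m i j (z*g*z⁻¹*g⁻¹) ∈ JId G m ^ (k+2) := by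
  set c := z*g*z⁻¹*g⁻¹ with hcdef
  have e1 := sEl_mul i j c (g*z)
  rw [show c * (g*z) = z*g by rw [hcdef]; group] at e1
  have e2 := sEl_mul i j z g
  have e3 := sEl_mul i j g z
  have key : sEl m i j c = (∑ h, sEl m i h z * sEl m h j g)
      - (∑ h, sEl m i h g * sEl m h j z)
      - ∑ h, sEl m i h c * sEl m h j (g*z) := by
    linear_combination e2 - e1 - e3
  rw [key, show (k+2) = (k+1)+1 from rfl, pow_succ]
  refine sub_mem (sub_mem ?_ ?_) ?_
  · exact Ideal.sum_mem _ fun h _ => Ideal.mul_mem_mul (hz i h) (sEl_mem_JId h j g)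
  · refine Ideal.sum_mem _ fun h _ => ?_
    rw [mul_comm (sEl m i h g)]
    exact Ideal.mul_mem_mul (hz h j) (sEl_mem_JId i h g)
  · exact Ideal.sum_mem _ fun h _ => Ideal.mul_mem_mul (hc i h) (sEl_mem_JId h j (g*z))

end Aux

/-- for `y` in the `(k+1)`-st term `Γ_G(k+1) = lowerCentralSeries G k` of the
lower central series, `s_{ij}(y) ∈ 𝔍_G^{k+1}`. -/
theorem sEl_lowerCentral {G : Type*} [Group G] (m : ℕ) (hm : 2 ≤ m) (k : ℕ)
    (y : G) (hy : y ∈ Subgroup.lowerCentralSeries (⊤ : Subgroup G) k) (i j : Fin m) :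
    sEl m i j y ∈ JId G m ^ (k + 1) := by
  induction k generalizing y i j with
  | zero => simpa [pow_one] using sEl_mem_JId i j y
  | succ k ih =>
    have hy' : y ∈ Subgroup.closure
        {x : G | ∃ p ∈ Subgroup.lowerCentralSeries (⊤ : Subgroup G) k, ∃ q ∈ (⊤ : Subgroup G), p * q * p⁻¹ * q⁻¹ = x} := by
      exact hy
    refine Subgroup.closure_induction
      (p := fun y _ => ∀ i j, sEl m i j y ∈ JId G m ^ (k+2)) ?_ ?_ ?_ ?_ hy' i j
    · rintro x ⟨z, hz, g, -, rfl⟩ i j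
      have hcmem : z * g * z⁻¹ * g⁻¹ ∈ Subgroup.lowerCentralSeries (⊤ : Subgroup G) k := by
        apply Subgroup.lowerCentralSeries_antitone (S := ⊤) (Nat.le_succ k)
        rw [Subgroup.lowerCentralSeries_succ]
        exact Subgroup.subset_closure ⟨z, hz, g, trivial, rfl⟩
      exact sEl_comm_mem k z g (fun i j => ih z hz i j) (fun i j => ih _ hcmem i j) i j
    · intro i j; rw [sEl_one]; exact zero_mem _
    · intro a b _ _ ha hb i j; exact sEl_mul_mem ha hb i j
    · intro a _ ha i j; exact sEl_inv_mem ha i j
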